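/- arXiv:2509.25753 — 2 statements merged into one kernel-verified Lean document; each statement's English description precedes it below -/
import Mathlib

section
/- For every multiindex ν, the following convolution-type bound holds: Σ_{0≠m<ν} binom(ν,m)·[1/2]_{|m|}·[1/2]_{|ν−m|} ≤ 2·[1/2]_{|ν|}, where the sum ranges over all multiindices m with 0 ≠ m and m < ν (in particular, the sum is empty and equals 0 when |ν| ≤ 1). -/
/-- The absolute value of the falling factorial of `1/2`:
`[1/2]_n = ∏_{i=0}^{n-1} |1/2 - i|`, with `[1/2]_0 = 1`. -/
noncomputable def fallHalf (n : ℕ) : ℝ := ∏ i ∈ Finset.range n, |1 / 2 - (i : ℝ)|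

/-- The order `|ν| = Σ_j ν_j` of a multiindex `ν : ℕ →₀ ℕ`. -/
def morder (ν : ℕ →₀ ℕ) : ℕ := ν.sum fun _ k => k

/-- The multiindex binomial coefficient `binom(ν, m) = ∏_j binom(ν_j, m_j)`. -/
def mbinom (ν m : ℕ →₀ ℕ) : ℕ := ∏ j ∈ ν.support, Nat.choose (ν j) (m j)

open Finset Polynomial

/-- The (signed) falling factorial of 1/2. -/
noncomputable def halfDesc (n : ℕ) : ℝ := ∏ i ∈ Finset.range n, (1 / 2 - (i : ℝ))

lemma fallHalf_nonneg (n : ℕ) : 0 ≤ fallHalf n :=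
  Finset.prod_nonneg fun _ _ => abs_nonneg _

lemma halfDesc_succ (n : ℕ) : halfDesc (n + 1) = halfDesc n * (1 / 2 - n) :=
  Finset.prod_range_succ _ _

lemma fallHalf_succ (n : ℕ) : fallHalf (n + 1) = fallHalf n * |1 / 2 - (n : ℝ)| :=
  Finset.prod_range_succ _ _

lemma halfDesc_sign (n : ℕ) (hn : 1 ≤ n) : halfDesc n = (-1) ^ (n + 1) * fallHalf n := by
  induction n with
  | zero => omega
  | succ n ih =>
    rcases Nat.lt_or_ge n 1 with h | h
    · interval_cases n
      norm_num [halfDesc, fallHalf, abs_of_nonneg]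
    · have hn' : (1 : ℝ) ≤ n := by exact_mod_cast h
      have habs : |1 / 2 - (n : ℝ)| = -(1 / 2 - n) := by
        rw [abs_of_nonpos]; linarith
      rw [halfDesc_succ, ih h, fallHalf_succ, habs, pow_succ]
      ring

lemma smeval_descPochhammer_real (n : ℕ) (x : ℝ) :
    (descPochhammer ℤ n).smeval x = ∏ i ∈ Finset.range n, (x - (i : ℝ)) := by
  induction n with
  | zero => simp [descPochhammer_zero, Polynomial.smeval_one]
  | succ n ih =>
    rw [descPochhammer_succ_right, Polynomial.smeval_mul, ih, Polynomial.smeval_sub,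
      Polynomial.smeval_X, Finset.prod_range_succ, Polynomial.smeval_natCast]
    simp

/-- One-dimensional convolution identity. -/
lemma fallHalf_one_dim (n : ℕ) (hn : 2 ≤ n) :
    ∑ k ∈ Finset.Ioo 0 n, (n.choose k : ℝ) * fallHalf k * fallHalf (n - k)
      = 2 * fallHalf n := by
  have hvdm := Ring.descPochhammer_smeval_add (R := ℝ) (r := 1/2) (s := 1/2) n (Commute.all _ _)
  have hzero : (descPochhammer ℤ n).smeval ((1:ℝ)/2 + 1/2) = 0 := by
    rw [smeval_descPochhammer_real]
    apply Finset.prod_eq_zero (i := 1)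
    · exact Finset.mem_range.mpr (by omega)
    · norm_num
  rw [hzero] at hvdm
  have hrng : (0:ℝ) = ∑ k ∈ Finset.range (n+1),
      (n.choose k : ℝ) * ((descPochhammer ℤ k).smeval ((1:ℝ)/2) *
        (descPochhammer ℤ (n - k)).smeval ((1:ℝ)/2)) := by
    rw [hvdm, Finset.Nat.sum_antidiagonal_eq_sum_range_succ_mk]
  simp only [smeval_descPochhammer_real] at hrng
  have hHD : ∀ k, (∏ i ∈ Finset.range k, ((1:ℝ)/2 - (i : ℝ))) = halfDesc k := fun k => rfl
  simp only [hHD] at hrng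
  -- split off the k = 0 and k = n terms
  have hset : Finset.range (n + 1) = insert 0 (insert n (Finset.Ioo 0 n)) := by
    ext k
    simp only [Finset.mem_range, Finset.mem_insert, Finset.mem_Ioo]
    omega
  rw [hset, Finset.sum_insert, Finset.sum_insert] at hrng
  · have h0 : halfDesc 0 = 1 := by simp [halfDesc]
    have hsgn : ∀ k ∈ Finset.Ioo 0 n,
        (n.choose k : ℝ) * (halfDesc k * halfDesc (n - k))
          = (-1)^n * ((n.choose k : ℝ) * fallHalf k * fallHalf (n - k)) := by
      intro k hk
      rw [Finset.mem_Ioo] at hk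
      rw [halfDesc_sign k hk.1, halfDesc_sign (n - k) (by omega)]
      have : (-1:ℝ)^(k+1) * ((-1:ℝ)^(n-k+1)) = (-1)^n := by
        rw [← pow_add]
        have : k + 1 + (n - k + 1) = n + 2 := by omega
        rw [this, pow_add]
        norm_num
      calc (n.choose k : ℝ) * ((-1)^(k+1) * fallHalf k * ((-1)^(n-k+1) * fallHalf (n-k)))
          = ((-1:ℝ)^(k+1) * ((-1:ℝ)^(n-k+1))) * ((n.choose k : ℝ) * fallHalf k * fallHalf (n-k)) := by ring
        _ = (-1)^n * ((n.choose k : ℝ) * fallHalf k * fallHalf (n - k)) := by rw [this]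
    rw [Finset.sum_congr rfl hsgn, ← Finset.mul_sum] at hrng
    simp only [Nat.choose_zero_right, Nat.choose_self, Nat.sub_zero, Nat.sub_self, h0,
      Nat.cast_one, one_mul, mul_one] at hrng
    rw [halfDesc_sign n (by omega)] at hrng
    have hne : ((-1:ℝ))^n ≠ 0 := by
      apply pow_ne_zero; norm_num
    have key : (-1:ℝ)^n * (∑ k ∈ Finset.Ioo 0 n, (n.choose k : ℝ) * fallHalf k * fallHalf (n - k)
        - 2 * fallHalf n) = 0 := by
      have hp : (-1:ℝ)^(n+1) = -((-1:ℝ)^n) := by rw [pow_succ]; ring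
      rw [hp] at hrng
      linear_combination -hrng
    have := (mul_eq_zero.mp key).resolve_left hne
    linarith
  · simp only [Finset.mem_insert, Finset.mem_Ioo]
    omega
  · simp only [Finset.mem_insert, Finset.mem_Ioo]
    omega

lemma morder_eq_zero_iff {f : ℕ →₀ ℕ} : morder f = 0 ↔ f = 0 := by
  unfold morder
  rw [Finsupp.sum, Finset.sum_eq_zero_iff]
  constructor
  · intro h; ext j
    by_cases hj : j ∈ f.support
    · exact h j hj
    · simpa using Finsupp.notMem_support_iff.mp hj
  · intro h; simp [h]

lemma morder_add (f g : ℕ →₀ ℕ) : morder (f + g) = morder f + morder g :=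
  Finsupp.sum_add_index' (fun _ => rfl) (fun _ _ _ => rfl)

lemma morder_sub_add {m ν : ℕ →₀ ℕ} (h : m ≤ ν) :
    morder (ν - m) + morder m = morder ν := by
  rw [← morder_add, tsub_add_cancel_of_le h]

lemma morder_eq_sum_subset {f : ℕ →₀ ℕ} {s : Finset ℕ} (h : f.support ⊆ s) :
    morder f = ∑ j ∈ s, f j := by
  unfold morder
  rw [Finsupp.sum]
  exact Finset.sum_subset h (fun j _ hj => Finsupp.notMem_support_iff.mp hj)

/-- Multivariate Vandermonde: sum of multinomial binomials over the antidiagonal. -/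
lemma sum_finsuppAntidiag_choose (ν : ℕ →₀ ℕ) (k : ℕ) :
    ∑ f ∈ Finset.finsuppAntidiag ν.support k, ∏ j ∈ ν.support, Nat.choose (ν j) (f j)
      = Nat.choose (morder ν) k := by
  have h1 : ((Nat.choose (morder ν) k : ℕ)) =
      PowerSeries.coeff k ((((1 + Polynomial.X) ^ (morder ν) : Polynomial ℕ) : PowerSeries ℕ)) := by
    rw [Polynomial.coeff_coe, Polynomial.coeff_one_add_X_pow, Nat.cast_id]
  have h2 : (((1 + Polynomial.X) ^ (morder ν) : Polynomial ℕ) : PowerSeries ℕ)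
      = ∏ j ∈ ν.support, (((1 + Polynomial.X) ^ (ν j) : Polynomial ℕ) : PowerSeries ℕ) := by
    simp only [← Polynomial.coeToPowerSeries.ringHom_apply, ← map_prod]
    congr 1
    rw [Finset.prod_pow_eq_pow_sum, ← morder_eq_sum_subset subset_rfl]
  rw [h1, h2, PowerSeries.coeff_prod]
  apply Finset.sum_congr rfl
  intro f _
  apply Finset.prod_congr rfl
  intro j _
  rw [Polynomial.coeff_coe, Polynomial.coeff_one_add_X_pow, Nat.cast_id]

lemma sum_filter_mbinom (ν : ℕ →₀ ℕ) (k : ℕ) (hk : k ∈ Finset.Ioo 0 (morder ν)) :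
    ∑ m ∈ (Finset.Ioo 0 ν).filter (fun m => morder m = k), mbinom ν m
      = Nat.choose (morder ν) k := by
  rw [Finset.mem_Ioo] at hk
  rw [← sum_finsuppAntidiag_choose ν k]
  apply Finset.sum_subset
  · intro m hm
    simp only [Finset.mem_filter, Finset.mem_Ioo] at hm
    obtain ⟨⟨hm0, hmν⟩, hmk⟩ := hm
    have hle : m ≤ ν := le_of_lt hmν
    have hsupp : m.support ⊆ ν.support := by
      intro j hj
      rw [Finsupp.mem_support_iff] at hj ⊢
      have := Finsupp.le_def.mp hle j
      omega
    rw [Finset.mem_finsuppAntidiag]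
    refine ⟨?_, hsupp⟩
    rw [← morder_eq_sum_subset hsupp] at *
    exact hmk
  · intro f hf hnf
    rw [Finset.mem_finsuppAntidiag] at hf
    obtain ⟨hfsum, hfsupp⟩ := hf
    have hford : morder f = k := by rw [morder_eq_sum_subset hfsupp]; exact hfsum
    by_contra hne
    -- mbinom ν f ≠ 0 means f j ≤ ν j for all j in support ν, hence f ≤ ν
    have hle : f ≤ ν := by
      rw [Finsupp.le_def]
      intro j
      by_cases hj : j ∈ ν.support
      · by_contra hgt
        apply hne
        unfold mbinom
        apply Finset.prod_eq_zero hj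
        exact Nat.choose_eq_zero_of_lt (by omega)
      · have hj' : j ∉ f.support := fun h => hj (hfsupp h)
        rw [Finsupp.notMem_support_iff.mp hj']
        exact Nat.zero_le _
    apply hnf
    simp only [Finset.mem_filter, Finset.mem_Ioo]
    refine ⟨⟨?_, ?_⟩, hford⟩
    · rcases eq_or_lt_of_le (zero_le (a := f)) with h | h
      · exfalso
        rw [← h] at hford
        simp [morder_eq_zero_iff.mpr rfl] at hford
        omega
      · exact h
    · rcases eq_or_lt_of_le hle with h | h
      · exfalso; rw [h] at hford; omega
      · exact h

/-- Convolution-type bound for the falling factorial of `1/2`: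
`Σ_{0 ≠ m < ν} binom(ν,m) [1/2]_{|m|} [1/2]_{|ν-m|} ≤ 2 [1/2]_{|ν|}`. -/
theorem fallHalf_convolution_bound (ν : ℕ →₀ ℕ) :
    ∑ m ∈ Finset.Ioo 0 ν,
        (mbinom ν m : ℝ) * fallHalf (morder m) * fallHalf (morder (ν - m))
      ≤ 2 * fallHalf (morder ν) := by
  set n := morder ν with hn
  -- group the sum by the order of m
  have hmaps : ∀ m ∈ Finset.Ioo 0 ν, morder m ∈ Finset.Ioo 0 n := by
    intro m hm
    rw [Finset.mem_Ioo] at hm ⊢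
    obtain ⟨h0, hlt⟩ := hm
    have hle : m ≤ ν := le_of_lt hlt
    have hdecomp := morder_sub_add hle
    constructor
    · rcases Nat.eq_zero_or_pos (morder m) with h | h
      · exact absurd (morder_eq_zero_iff.mp h) h0.ne'
      · exact h
    · rcases Nat.eq_zero_or_pos (morder (ν - m)) with h | h
      · exfalso
        have : ν - m = 0 := morder_eq_zero_iff.mp h
        have : ν ≤ m := tsub_eq_zero_iff_le.mp this
        exact absurd (le_antisymm hle this) (ne_of_lt hlt)
      · omega
  rw [← Finset.sum_fiberwise_of_maps_to hmaps]
  have hinner : ∀ k ∈ Finset.Ioo 0 n,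
      ∑ m ∈ (Finset.Ioo 0 ν).filter (fun m => morder m = k),
          (mbinom ν m : ℝ) * fallHalf (morder m) * fallHalf (morder (ν - m))
        = (n.choose k : ℝ) * fallHalf k * fallHalf (n - k) := by
    intro k hk
    have : ∀ m ∈ (Finset.Ioo 0 ν).filter (fun m => morder m = k),
        (mbinom ν m : ℝ) * fallHalf (morder m) * fallHalf (morder (ν - m))
          = (mbinom ν m : ℝ) * (fallHalf k * fallHalf (n - k)) := by
      intro m hm
      simp only [Finset.mem_filter, Finset.mem_Ioo] at hm
      obtain ⟨⟨h0, hlt⟩, hmk⟩ := hm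
      have hle : m ≤ ν := le_of_lt hlt
      have hdecomp := morder_sub_add hle
      have : morder (ν - m) = n - k := by omega
      rw [hmk, this]
      ring
    rw [Finset.sum_congr rfl this, ← Finset.sum_mul, ← Nat.cast_sum]
    rw [sum_filter_mbinom ν k hk]
    ring
  rw [Finset.sum_congr rfl hinner]
  rcases Nat.lt_or_ge n 2 with h2 | h2
  · -- Ioo 0 n is empty
    have : Finset.Ioo 0 n = ∅ := by
      ext k; simp only [Finset.mem_Ioo, Finset.notMem_empty, iff_false]; omega
    rw [this, Finset.sum_empty]
    have := fallHalf_nonneg n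
    linarith
  · rw [fallHalf_one_dim n h2]
end

section
/- Let λ ∈ (1/2, 1), let ρ > 0, and let β : {1,2,…} → (0,∞) satisfy Σ_{j≥1} β_j^{2λ/(1+λ)} < ∞. Set b := 2·ζ(2λ)/(2π²)^λ, where ζ(x) := Σ_{n≥1} n^{−x}, and for every finite subset u ⊂ {1,2,…} define the weight γ_u := ( [1/2]_{|u|} · ∏_{j∈u} ( ρβ_j / √b ) )^{2/(1+λ)}. Then sup_{s≥1} ( Σ_{∅≠u⊆{1,…,s}} γ_u^λ · b^{|u|} )^{1/(2λ)} · ( Σ_{u⊆{1,…,s}} [1/2]_{|u|}² · ( ∏_{j∈u} (ρβ_j)² ) / γ_u )^{1/2} < ∞, i.e., this quantity is bounded independently of the truncation dimension s. -/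
/-- The Riemann zeta function on reals, `ζ(x) = Σ_{n≥1} n^{−x}`. -/
noncomputable def zetaReal (x : ℝ) : ℝ := ∑' n : ℕ, ((n : ℝ) + 1) ^ (-x)

open Finset Filter

lemma fallHalf_pos (n : ℕ) : 0 < fallHalf n := by
  unfold fallHalf
  apply Finset.prod_pos
  intro i _
  rw [abs_pos]
  rcases Nat.eq_zero_or_pos i with h | h
  · subst h; norm_num
  · have : (1:ℝ) ≤ (i:ℝ) := by exact_mod_cast h
    intro hcon; linarith

lemma fallHalf_le_factorial (n : ℕ) : fallHalf n ≤ n.factorial := by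
  unfold fallHalf
  calc ∏ i ∈ Finset.range n, |1 / 2 - (i : ℝ)|
      ≤ ∏ i ∈ Finset.range n, ((i:ℝ) + 1) := by
        apply Finset.prod_le_prod (fun i _ => abs_nonneg _)
        intro i _
        have : (0:ℝ) ≤ (i:ℝ) := Nat.cast_nonneg i
        rw [abs_le]
        constructor <;> linarith
    _ = (n.factorial : ℝ) := by
        exact_mod_cast Finset.prod_range_add_one_eq_factorial n

lemma binom_aux : ∀ (n : ℕ) (C a : ℝ), 0 ≤ C → 0 ≤ a →
    C ^ (n + 1) + ((n:ℝ) + 1) * a * C ^ n ≤ (C + a) ^ (n + 1) := by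
  intro n
  induction n with
  | zero => intro C a hC ha; norm_num
  | succ n ih =>
    intro C a hC ha
    have h := ih C a hC ha
    have hCa : (0:ℝ) ≤ C + a := by linarith
    have h2 : (C + a) * (C ^ (n + 1) + ((n:ℝ) + 1) * a * C ^ n)
        ≤ (C + a) ^ (n + 2) := by
      calc (C + a) * (C ^ (n + 1) + ((n:ℝ) + 1) * a * C ^ n)
          ≤ (C + a) * (C + a) ^ (n + 1) := by
            exact mul_le_mul_of_nonneg_left h hCa
        _ = (C + a) ^ (n + 2) := by ring
    have hnn : (0:ℝ) ≤ ((n:ℝ) + 1) * (a * a) * C ^ n :=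
      mul_nonneg (mul_nonneg (by positivity) (mul_nonneg ha ha)) (pow_nonneg hC n)
    have h3 : (C + a) * (C ^ (n + 1) + ((n:ℝ) + 1) * a * C ^ n)
        = C ^ (n + 2) + ((n:ℝ) + 2) * a * C ^ (n + 1) + ((n:ℝ) + 1) * (a * a) * C ^ n := by
      ring
    have h4 : C ^ (n + 2) + ((n:ℝ) + 2) * a * C ^ (n + 1) ≤ (C + a) ^ (n + 2) := by
      linarith
    have hcast : ((n:ℝ) + 1) + 1 = (n:ℝ) + 2 := by ring
    push_cast
    calc C ^ (n + 1 + 1) + ((n:ℝ) + 1 + 1) * a * C ^ (n + 1)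
        = C ^ (n + 2) + ((n:ℝ) + 2) * a * C ^ (n + 1) := by ring
      _ ≤ (C + a) ^ (n + 2) := h4
      _ = (C + a) ^ (n + 1 + 1) := by ring

lemma esymm_le (c : ℕ → ℝ) : ∀ (t : Finset ℕ), (∀ j ∈ t, 0 ≤ c j) → ∀ n : ℕ,
    (n.factorial : ℝ) * ∑ u ∈ t.powersetCard n, ∏ j ∈ u, c j
      ≤ (∑ j ∈ t, c j) ^ n := by
  intro t
  induction t using Finset.induction_on with
  | empty =>
    intro _ n
    cases n with
    | zero => simp
    | succ n =>
      rw [Finset.powersetCard_eq_empty.mpr (by simp)]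
      simp
  | insert a t ha ih =>
    intro hc n
    have hca : 0 ≤ c a := hc a (mem_insert_self a t)
    have hct : ∀ j ∈ t, 0 ≤ c j := fun j hj => hc j (mem_insert_of_mem hj)
    have hC : 0 ≤ ∑ j ∈ t, c j := Finset.sum_nonneg hct
    have hprod0 : ∀ u ∈ t.powerset, (0:ℝ) ≤ ∏ j ∈ u, c j := by
      intro u hu
      exact Finset.prod_nonneg fun j hj => hct j (Finset.mem_powerset.mp hu hj)
    cases n with
    | zero => simp
    | succ n =>
      rw [Finset.powersetCard_succ_insert ha]
      have hdisj : Disjoint (t.powersetCard (n+1))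
          ((t.powersetCard n).image (insert a)) := by
        rw [Finset.disjoint_left]
        intro u hu hu'
        obtain ⟨v, hv, rfl⟩ := Finset.mem_image.mp hu'
        exact ha ((Finset.mem_powersetCard.mp hu).1 (Finset.mem_insert_self a v))
      rw [Finset.sum_union hdisj]
      have himg : ∑ u ∈ (t.powersetCard n).image (insert a), ∏ j ∈ u, c j
          = c a * ∑ u ∈ t.powersetCard n, ∏ j ∈ u, c j := by
        rw [Finset.sum_image, Finset.mul_sum]
        · apply Finset.sum_congr rfl
          intro u hu
          have hau : a ∉ u := fun h => ha ((Finset.mem_powersetCard.mp hu).1 h)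
          rw [Finset.prod_insert hau]
        · intro u hu v hv h
          have hau : a ∉ u := fun h' => ha ((Finset.mem_powersetCard.mp hu).1 h')
          have hav : a ∉ v := fun h' => ha ((Finset.mem_powersetCard.mp hv).1 h')
          rw [← Finset.erase_insert hau, ← Finset.erase_insert hav, h]
      rw [himg, Finset.sum_insert ha]
      have e1 := ih hct (n+1)
      have e2 := ih hct n
      have hE2 : 0 ≤ ∑ u ∈ t.powersetCard n, ∏ j ∈ u, c j := by
        apply Finset.sum_nonneg
        intro u hu
        exact Finset.prod_nonneg fun j hj =>
          hct j ((Finset.mem_powersetCard.mp hu).1 hj)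
      have key := binom_aux n (∑ j ∈ t, c j) (c a) hC hca
      have hfact : (((n+1).factorial : ℕ) : ℝ) = ((n:ℝ)+1) * (n.factorial : ℝ) := by
        rw [Nat.factorial_succ]; push_cast; ring
      calc ((n+1).factorial : ℝ) *
            ((∑ u ∈ t.powersetCard (n+1), ∏ j ∈ u, c j)
              + c a * ∑ u ∈ t.powersetCard n, ∏ j ∈ u, c j)
          = ((n+1).factorial : ℝ) * (∑ u ∈ t.powersetCard (n+1), ∏ j ∈ u, c j)
            + ((n:ℝ)+1) * (c a * ((n.factorial : ℝ) * ∑ u ∈ t.powersetCard n, ∏ j ∈ u, c j)) := by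
            rw [hfact]; ring
        _ ≤ (∑ j ∈ t, c j) ^ (n+1)
            + ((n:ℝ)+1) * (c a * (∑ j ∈ t, c j) ^ n) := by
            have h2 : c a * ((n.factorial : ℝ) * ∑ u ∈ t.powersetCard n, ∏ j ∈ u, c j)
                ≤ c a * (∑ j ∈ t, c j) ^ n := mul_le_mul_of_nonneg_left e2 hca
            have h3 : ((n:ℝ)+1) * (c a * ((n.factorial : ℝ) * ∑ u ∈ t.powersetCard n, ∏ j ∈ u, c j))
                ≤ ((n:ℝ)+1) * (c a * (∑ j ∈ t, c j) ^ n) :=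
              mul_le_mul_of_nonneg_left h2 (by positivity)
            linarith
        _ ≤ ((∑ j ∈ t, c j) + c a) ^ (n+1) := by linarith
        _ = (c a + ∑ j ∈ t, c j) ^ (n+1) := by ring

/-- Dimension-independent boundedness of the QMC error constant `C_{s,γ,λ}`
(for randomly shifted lattice rules in the weighted unanchored Sobolev space)
with the product-and-order-dependent weights
`γ_u = ([1/2]_{|u|} ∏_{j∈u} ρβ_j/√b)^{2/(1+λ)}`,
where `b = 2ζ(2λ)/(2π²)^λ` and `Σ_{j≥1} β_j^{2λ/(1+λ)} < ∞`. -/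
theorem qmc_constant_bounded (l ρ : ℝ) (hl0 : 1 / 2 < l) (hl1 : l < 1)
    (hρ : 0 < ρ)
    (β : ℕ → ℝ) (hβ : ∀ j : ℕ, 1 ≤ j → 0 < β j)
    (hsum : Summable fun j : ℕ => β (j + 1) ^ (2 * l / (1 + l)))
    (b : ℝ) (hb : b = 2 * zetaReal (2 * l) / (2 * Real.pi ^ 2) ^ l)
    (γ : Finset ℕ → ℝ)
    (hγ : ∀ u : Finset ℕ,
      γ u = (fallHalf u.card * ∏ j ∈ u, (ρ * β j / Real.sqrt b)) ^ (2 / (1 + l))) :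
    ∃ M : ℝ, ∀ s : ℕ, 1 ≤ s →
      (∑ u ∈ (Finset.Icc 1 s).powerset.erase ∅, γ u ^ l * b ^ u.card) ^ (1 / (2 * l)) *
        (∑ u ∈ (Finset.Icc 1 s).powerset,
            fallHalf u.card ^ 2 * (∏ j ∈ u, (ρ * β j) ^ 2) / γ u) ^ (1 / 2 : ℝ)
        ≤ M := by
  have hπ := Real.pi_pos
  have hl : (0:ℝ) < l := by linarith
  have h1l : (0:ℝ) < 1 + l := by linarith
  set p : ℝ := 2 * l / (1 + l) with hp
  have hp0 : 0 < p := by positivity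
  have hp1 : p < 1 := by rw [hp, div_lt_one h1l]; linarith
  -- positivity of b
  have hzsum : Summable (fun n : ℕ => ((n:ℝ) + 1) ^ (-(2*l))) := by
    have h0 : Summable (fun n : ℕ => ((n:ℝ)) ^ (-(2*l))) := by
      rw [Real.summable_nat_rpow]; linarith
    have h1 : Summable (fun n : ℕ => (((n+1 : ℕ)):ℝ) ^ (-(2*l))) :=
      (summable_nat_add_iff 1).2 h0
    exact h1.congr (fun n => by push_cast; ring_nf)
  have hζ : 0 < zetaReal (2*l) := by
    unfold zetaReal
    apply Summable.tsum_pos hzsum (fun n => Real.rpow_nonneg (by positivity) _) 0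
    apply Real.rpow_pos_of_pos; norm_num
  have hb0 : 0 < b := by
    rw [hb]
    exact div_pos (by linarith) (Real.rpow_pos_of_pos (by positivity) _)
  have hsqb : (0:ℝ) < Real.sqrt b := Real.sqrt_pos.mpr hb0
  set q : ℝ := 1 / (1 + l) with hq
  set c : ℕ → ℝ := fun j => (ρ * β j) ^ p * b ^ q with hcdef
  have hc0 : ∀ j : ℕ, 1 ≤ j → 0 ≤ c j := fun j hj =>
    mul_nonneg (Real.rpow_nonneg (mul_pos hρ (hβ j hj)).le _) (Real.rpow_nonneg hb0.le _)
  -- the key per-set identities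
  have key : ∀ u : Finset ℕ, (∀ j ∈ u, 1 ≤ j) →
      γ u ^ l * b ^ u.card = fallHalf u.card ^ p * ∏ j ∈ u, c j
      ∧ fallHalf u.card ^ 2 * (∏ j ∈ u, (ρ * β j) ^ 2) / γ u
        = fallHalf u.card ^ p * ∏ j ∈ u, c j := by
    intro u hu
    have hβu : ∀ j ∈ u, 0 < ρ * β j := fun j hj => mul_pos hρ (hβ j (hu j hj))
    have hF := fallHalf_pos u.card
    have hAprod : 0 < ∏ j ∈ u, (ρ * β j / Real.sqrt b) :=
      Finset.prod_pos fun j hj => div_pos (hβu j hj) hsqb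
    have hA : 0 < fallHalf u.card * ∏ j ∈ u, (ρ * β j / Real.sqrt b) :=
      mul_pos hF hAprod
    have hqhalf : (1:ℝ)/2 * (2/(1+l)) = q := by
      rw [hq]; field_simp
    have hsqrl : ∀ r : ℝ, (Real.sqrt b) ^ r = b ^ ((1:ℝ)/2 * r) := by
      intro r
      rw [Real.sqrt_eq_rpow, ← Real.rpow_mul hb0.le]
    constructor
    · -- first identity
      rw [hγ u, ← Real.rpow_mul hA.le]
      have hexp : 2 / (1 + l) * l = p := by rw [hp]; ring
      rw [hexp, Real.mul_rpow hF.le hAprod.le,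
        ← Real.finset_prod_rpow u _ (fun j hj => (div_pos (hβu j hj) hsqb).le) p]
      rw [← Finset.prod_const (b := b) (s := u)]   -- b ^ card = ∏ b  (as rw of prod_const backwards)
      rw [mul_assoc, ← Finset.prod_mul_distrib]
      congr 1
      apply Finset.prod_congr rfl
      intro j hj
      have hx := hβu j hj
      rw [Real.div_rpow hx.le hsqb.le, hsqrl p]
      have hbne : b ^ ((1:ℝ)/2 * p) ≠ 0 := ne_of_gt (Real.rpow_pos_of_pos hb0 _)
      have hbq : b ^ ((1:ℝ) - 1/2*p) = b ^ q := by
        congr 1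
        rw [hp, hq]; field_simp; try ring
      calc (ρ * β j) ^ p / b ^ ((1:ℝ)/2 * p) * b
          = (ρ * β j) ^ p * (b ^ (1:ℝ) / b ^ ((1:ℝ)/2 * p)) := by
            rw [Real.rpow_one]; ring
        _ = (ρ * β j) ^ p * b ^ ((1:ℝ) - 1/2*p) := by
            rw [← Real.rpow_sub hb0]
        _ = (ρ * β j) ^ p * b ^ q := by rw [hbq]
    · -- second identity
      have hγeq : γ u = fallHalf u.card ^ (2/(1+l))
          * ∏ j ∈ u, (ρ * β j / Real.sqrt b) ^ (2/(1+l)) := by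
        rw [hγ u, Real.mul_rpow hF.le hAprod.le,
          ← Real.finset_prod_rpow u _ (fun j hj => (div_pos (hβu j hj) hsqb).le) _]
      rw [hγeq]
      rw [show fallHalf u.card ^ 2 = fallHalf u.card ^ ((2:ℕ):ℝ) from
        (Real.rpow_natCast _ 2).symm]
      have hprod2 : (∏ j ∈ u, (ρ * β j) ^ 2) = ∏ j ∈ u, (ρ * β j) ^ ((2:ℕ):ℝ) := by
        apply Finset.prod_congr rfl
        intro j hj
        exact (Real.rpow_natCast _ 2).symm
      rw [hprod2]
      rw [mul_div_mul_comm, ← Finset.prod_div_distrib]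
      have hFpart : fallHalf u.card ^ ((2:ℕ):ℝ) / fallHalf u.card ^ (2/(1+l))
          = fallHalf u.card ^ p := by
        rw [← Real.rpow_sub hF]
        congr 1
        rw [hp]; push_cast; field_simp; try ring
      rw [hFpart]
      congr 1
      apply Finset.prod_congr rfl
      intro j hj
      have hx := hβu j hj
      rw [Real.div_rpow hx.le hsqb.le, hsqrl (2/(1+l)), hqhalf]
      have hbq : (0:ℝ) < b ^ q := Real.rpow_pos_of_pos hb0 _
      have hxr : (0:ℝ) < (ρ * β j) ^ (2/(1+l)) := Real.rpow_pos_of_pos hx _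
      rw [div_div_eq_mul_div, mul_div_right_comm, ← Real.rpow_sub hx]
      congr 2
      rw [hp]; push_cast; field_simp; try ring
    -- end key
  -- summability of the tail
  have hcsum : Summable (fun j : ℕ => c (j+1)) := by
    have heq : ∀ j : ℕ, c (j+1) = (ρ ^ p * b ^ q) * β (j+1) ^ p := by
      intro j
      rw [hcdef]
      simp only []
      rw [Real.mul_rpow hρ.le (hβ (j+1) (by omega)).le]
      ring
    exact (hsum.mul_left (ρ ^ p * b ^ q)).congr (fun j => (heq j).symm)
  set C : ℝ := ∑' j : ℕ, c (j+1) with hCdef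
  have hC0 : 0 ≤ C := tsum_nonneg (fun j => hc0 _ (by omega))
  have hsum_le : ∀ s : ℕ, ∑ j ∈ Finset.Icc 1 s, c j ≤ C := by
    intro s
    rw [← Finset.Ico_add_one_right_eq_Icc, Finset.sum_Ico_eq_sum_range]
    have : ∀ i ∈ Finset.range (s + 1 - 1), c (1 + i) = c (i + 1) := by
      intro i _; rw [add_comm]
    rw [Finset.sum_congr rfl this]
    exact Summable.sum_le_tsum _ (fun i _ => hc0 _ (by omega)) hcsum
  -- summability of the dominating series
  have ha0 : ∀ n : ℕ, 0 ≤ ((n.factorial : ℝ)) ^ (p-1) * C ^ n := fun n =>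
    mul_nonneg (Real.rpow_nonneg (Nat.cast_nonneg _) _) (pow_nonneg hC0 _)
  have hasum : Summable (fun n : ℕ => ((n.factorial : ℝ)) ^ (p-1) * C ^ n) := by
    apply summable_of_ratio_norm_eventually_le (r := 1/2) (by norm_num)
    have htend : Tendsto (fun n : ℕ => ((n:ℝ)+1) ^ (1-p)) atTop atTop :=
      (tendsto_rpow_atTop (by linarith)).comp
        (tendsto_atTop_add_const_right _ 1 tendsto_natCast_atTop_atTop)
    filter_upwards [htend.eventually_ge_atTop (2*C)] with n hn
    rw [Real.norm_of_nonneg (ha0 _), Real.norm_of_nonneg (ha0 _)]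
    have hn1 : (0:ℝ) < (n:ℝ) + 1 := by positivity
    have hfc : (((n+1).factorial : ℕ) : ℝ) = ((n:ℝ)+1) * (n.factorial : ℝ) := by
      rw [Nat.factorial_succ]; push_cast; ring
    have h1 : (((n+1).factorial : ℕ) : ℝ) ^ (p-1)
        = ((n:ℝ)+1) ^ (p-1) * ((n.factorial : ℕ) : ℝ) ^ (p-1) := by
      rw [hfc, Real.mul_rpow hn1.le (Nat.cast_nonneg _)]
    have hXpos : (0:ℝ) < ((n:ℝ)+1) ^ (1-p) := Real.rpow_pos_of_pos hn1 _
    have hkey : ((n:ℝ)+1) ^ (p-1) * C ≤ 1/2 := by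
      rw [show p - 1 = -(1-p) by ring, Real.rpow_neg hn1.le]
      rw [inv_mul_le_iff₀ hXpos]
      calc C ≤ ((n:ℝ)+1) ^ (1-p) / 2 := by linarith
        _ = ((n:ℝ)+1) ^ (1-p) * (1/2) := by ring
    calc (((n+1).factorial : ℕ) : ℝ) ^ (p-1) * C ^ (n+1)
        = (((n:ℝ)+1) ^ (p-1) * C) * (((n.factorial : ℕ) : ℝ) ^ (p-1) * C ^ n) := by
          rw [h1]; ring
      _ ≤ (1/2) * (((n.factorial : ℕ) : ℝ) ^ (p-1) * C ^ n) :=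
          mul_le_mul_of_nonneg_right hkey (ha0 n)
  set K : ℝ := ∑' n : ℕ, ((n.factorial : ℝ)) ^ (p-1) * C ^ n with hK
  have hK1 : (1:ℝ) ≤ K := by
    have h0 : ((Nat.factorial 0 : ℕ) : ℝ) ^ (p-1) * C ^ 0 = 1 := by
      simp [Real.one_rpow]
    calc (1:ℝ) = ((Nat.factorial 0 : ℕ) : ℝ) ^ (p-1) * C ^ 0 := h0.symm
      _ ≤ K := Summable.le_tsum hasum 0 (fun i _ => ha0 i)
  -- the key bound on the full sum
  have bound : ∀ s : ℕ,
      ∑ u ∈ (Finset.Icc 1 s).powerset, (fallHalf u.card ^ p * ∏ j ∈ u, c j) ≤ K := by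
    intro s
    have hcIcc : ∀ j ∈ Finset.Icc 1 s, 0 ≤ c j := fun j hj =>
      hc0 j (Finset.mem_Icc.mp hj).1
    rw [Finset.powerset_card_disjiUnion]
    refine (Finset.sum_disjiUnion _ _ _).trans_le ?_
    calc ∑ i ∈ Finset.range ((Finset.Icc 1 s).card + 1),
          ∑ u ∈ (Finset.Icc 1 s).powersetCard i, (fallHalf u.card ^ p * ∏ j ∈ u, c j)
        ≤ ∑ i ∈ Finset.range ((Finset.Icc 1 s).card + 1),
          ((i.factorial : ℝ)) ^ (p-1) * C ^ i := by
          apply Finset.sum_le_sum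
          intro i _
          have hstep : ∑ u ∈ (Finset.Icc 1 s).powersetCard i,
              (fallHalf u.card ^ p * ∏ j ∈ u, c j)
              = fallHalf i ^ p * ∑ u ∈ (Finset.Icc 1 s).powersetCard i, ∏ j ∈ u, c j := by
            rw [Finset.mul_sum]
            apply Finset.sum_congr rfl
            intro u hu
            rw [(Finset.mem_powersetCard.mp hu).2]
          rw [hstep]
          have hE0 : 0 ≤ ∑ u ∈ (Finset.Icc 1 s).powersetCard i, ∏ j ∈ u, c j := by
            apply Finset.sum_nonneg
            intro u hu
            exact Finset.prod_nonneg fun j hj =>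
              hcIcc j ((Finset.mem_powersetCard.mp hu).1 hj)
          have hfacpos : (0:ℝ) < (i.factorial : ℝ) := by
            exact_mod_cast i.factorial_pos
          have hesymm := esymm_le c (Finset.Icc 1 s) hcIcc i
          have hE : ∑ u ∈ (Finset.Icc 1 s).powersetCard i, ∏ j ∈ u, c j
              ≤ C ^ i / (i.factorial : ℝ) := by
            rw [le_div_iff₀ hfacpos]
            calc (∑ u ∈ (Finset.Icc 1 s).powersetCard i, ∏ j ∈ u, c j) * (i.factorial : ℝ)
                = (i.factorial : ℝ) * ∑ u ∈ (Finset.Icc 1 s).powersetCard i, ∏ j ∈ u, c j := by ring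
              _ ≤ (∑ j ∈ Finset.Icc 1 s, c j) ^ i := hesymm
              _ ≤ C ^ i := pow_le_pow_left₀ (Finset.sum_nonneg hcIcc) (hsum_le s) i
          have hFp : fallHalf i ^ p ≤ ((i.factorial : ℕ) : ℝ) ^ p :=
            Real.rpow_le_rpow (fallHalf_pos i).le (fallHalf_le_factorial i) hp0.le
          calc fallHalf i ^ p * ∑ u ∈ (Finset.Icc 1 s).powersetCard i, ∏ j ∈ u, c j
              ≤ ((i.factorial : ℕ) : ℝ) ^ p * (C ^ i / (i.factorial : ℝ)) := by
                apply mul_le_mul hFp hE hE0 (Real.rpow_nonneg (Nat.cast_nonneg _) _)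
            _ = ((i.factorial : ℝ)) ^ (p-1) * C ^ i := by
                rw [show p - 1 = p + (-1) by ring, Real.rpow_add hfacpos,
                  Real.rpow_neg_one]
                ring
      _ ≤ K := Summable.sum_le_tsum _ (fun i _ => ha0 i) hasum
  -- conclusion
  refine ⟨K ^ (1/(2*l)) * K ^ (1/2 : ℝ), ?_⟩
  intro s _
  have hmem : ∀ u ∈ (Finset.Icc 1 s).powerset, ∀ j ∈ u, 1 ≤ j := fun u hu j hj =>
    (Finset.mem_Icc.mp (Finset.mem_powerset.mp hu hj)).1
  have hT0 : ∀ u ∈ (Finset.Icc 1 s).powerset,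
      0 ≤ fallHalf u.card ^ p * ∏ j ∈ u, c j := fun u hu =>
    mul_nonneg (Real.rpow_nonneg (fallHalf_pos _).le _)
      (Finset.prod_nonneg fun j hj => hc0 j (hmem u hu j hj))
  have hS1 : ∑ u ∈ (Finset.Icc 1 s).powerset.erase ∅, γ u ^ l * b ^ u.card
      ≤ K := by
    calc ∑ u ∈ (Finset.Icc 1 s).powerset.erase ∅, γ u ^ l * b ^ u.card
        = ∑ u ∈ (Finset.Icc 1 s).powerset.erase ∅,
            (fallHalf u.card ^ p * ∏ j ∈ u, c j) := by
          apply Finset.sum_congr rfl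
          intro u hu
          exact (key u (hmem u (Finset.mem_of_mem_erase hu))).1
      _ ≤ ∑ u ∈ (Finset.Icc 1 s).powerset, (fallHalf u.card ^ p * ∏ j ∈ u, c j) :=
          Finset.sum_le_sum_of_subset_of_nonneg (Finset.erase_subset _ _)
            (fun u hu _ => hT0 u hu)
      _ ≤ K := bound s
  have hS1' : 0 ≤ ∑ u ∈ (Finset.Icc 1 s).powerset.erase ∅, γ u ^ l * b ^ u.card := by
    apply Finset.sum_nonneg
    intro u hu
    rw [(key u (hmem u (Finset.mem_of_mem_erase hu))).1]
    exact hT0 u (Finset.mem_of_mem_erase hu)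
  have hS2 : ∑ u ∈ (Finset.Icc 1 s).powerset,
      fallHalf u.card ^ 2 * (∏ j ∈ u, (ρ * β j) ^ 2) / γ u ≤ K := by
    calc ∑ u ∈ (Finset.Icc 1 s).powerset,
          fallHalf u.card ^ 2 * (∏ j ∈ u, (ρ * β j) ^ 2) / γ u
        = ∑ u ∈ (Finset.Icc 1 s).powerset,
            (fallHalf u.card ^ p * ∏ j ∈ u, c j) := by
          apply Finset.sum_congr rfl
          intro u hu
          exact (key u (hmem u hu)).2
      _ ≤ K := bound s
  have hS2' : 0 ≤ ∑ u ∈ (Finset.Icc 1 s).powerset,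
      fallHalf u.card ^ 2 * (∏ j ∈ u, (ρ * β j) ^ 2) / γ u := by
    apply Finset.sum_nonneg
    intro u hu
    rw [(key u (hmem u hu)).2]
    exact hT0 u hu
  have hK0 : (0:ℝ) ≤ K := by linarith
  apply mul_le_mul
  · exact Real.rpow_le_rpow hS1' hS1 (by positivity)
  · exact Real.rpow_le_rpow hS2' hS2 (by norm_num)
  · exact Real.rpow_nonneg hS2' _
  · exact Real.rpow_nonneg hK0 _
end
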